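/- For fixed k ≥ 1, the quantity c_n^{(k)} / (ln n)^k tends to 1/k! as n → ∞. -/

import Mathlib

open Filter

/-- Roman harmonic number `c_n^{(k)}` as a real number. -/
noncomputable def romanHarmonic (n k : ℕ) : ℝ :=
  ∑ j ∈ Finset.Icc 1 n, (-1 : ℝ) ^ (j - 1) * (n.choose j) / (j : ℝ) ^ k

section RomanAux

open Finset Asymptotics

lemma tendsto_log_nat : Tendsto (fun n : ℕ => Real.log n) atTop atTop := by
  apply Filter.Tendsto.comp Real.tendsto_log_atTop tendsto_natCast_atTop_atTop

lemma log_ratio_tendsto : Tendsto (fun n : ℕ => Real.log ((n:ℝ)+1) / Real.log n) atTop (nhds 1) := by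
  have hub : Tendsto (fun n : ℕ => 1 + ((n:ℝ)⁻¹ / Real.log 2)) atTop (nhds 1) := by
    have hinv : Tendsto (fun n : ℕ => ((n:ℝ))⁻¹) atTop (nhds 0) := by
      simpa [one_div] using tendsto_one_div_atTop_nhds_zero_nat (𝕜 := ℝ)
    have : Tendsto (fun n : ℕ => (n:ℝ)⁻¹ / Real.log 2) atTop (nhds 0) := by
      simpa using hinv.div_const (Real.log 2)
    simpa using (tendsto_const_nhds (x := (1:ℝ))).add this
  apply tendsto_of_tendsto_of_tendsto_of_le_of_le' tendsto_const_nhds hub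
  · filter_upwards [eventually_ge_atTop 2] with n hn
    have h2 : (2:ℝ) ≤ (n:ℝ) := by exact_mod_cast hn
    have hlog : 0 < Real.log n := Real.log_pos (by linarith)
    rw [le_div_iff₀ hlog, one_mul]
    apply Real.log_le_log (by linarith)
    linarith
  · filter_upwards [eventually_ge_atTop 2] with n hn
    have h2 : (2:ℝ) ≤ (n:ℝ) := by exact_mod_cast hn
    have hn0 : (0:ℝ) < n := by linarith
    have hlog2 : 0 < Real.log 2 := Real.log_pos (by norm_num)
    have hlog : Real.log 2 ≤ Real.log n := Real.log_le_log (by norm_num) h2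
    have hd : Real.log ((n:ℝ)+1) - Real.log n ≤ (n:ℝ)⁻¹ := by
      rw [← Real.log_div (by linarith) (by linarith)]
      have := Real.log_le_sub_one_of_pos (x := ((n:ℝ)+1)/n) (by positivity)
      have e : ((n:ℝ)+1)/n - 1 = (n:ℝ)⁻¹ := by field_simp; ring
      linarith
    rw [div_le_iff₀ (lt_of_lt_of_le hlog2 hlog)]
    have : (n:ℝ)⁻¹ / Real.log 2 * Real.log n ≥ (n:ℝ)⁻¹ := by
      rw [ge_iff_le, div_mul_eq_mul_div, le_div_iff₀ hlog2]
      have : (0:ℝ) ≤ (n:ℝ)⁻¹ := by positivity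
      nlinarith
    nlinarith [Real.log_nonneg (show (1:ℝ) ≤ n by linarith)]

lemma pow_sub_pow_bounds {a b : ℝ} (ha : 0 ≤ a) (hab : a ≤ b) (p : ℕ) :
    ((p:ℝ)+1) * a^p * (b - a) ≤ b^(p+1) - a^(p+1)
      ∧ b^(p+1) - a^(p+1) ≤ ((p:ℝ)+1) * b^p * (b-a) := by
  have key : (∑ i ∈ range (p+1), b ^ i * a ^ (p - i)) * (b - a) = b^(p+1) - a^(p+1) := by
    have := geom_sum₂_mul (x := b) (y := a) (n := p+1)
    simpa using this
  have hb : 0 ≤ b := le_trans ha hab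
  have hba : 0 ≤ b - a := by linarith
  constructor
  · rw [← key]
    apply mul_le_mul_of_nonneg_right _ hba
    calc ((p:ℝ)+1) * a^p = ∑ _i ∈ range (p+1), a^p := by
          simp [mul_comm]
      _ ≤ ∑ i ∈ range (p+1), b ^ i * a ^ (p - i) := by
          apply Finset.sum_le_sum
          intro i hi
          rw [Finset.mem_range] at hi
          calc a^p = a^i * a^(p-i) := by rw [← pow_add]; congr 1; omega
            _ ≤ b^i * a^(p-i) := by
                apply mul_le_mul_of_nonneg_right (pow_le_pow_left₀ ha hab i) (by positivity)
  · rw [← key]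
    apply mul_le_mul_of_nonneg_right _ hba
    calc (∑ i ∈ range (p+1), b ^ i * a ^ (p - i)) ≤ ∑ _i ∈ range (p+1), b^p := by
          apply Finset.sum_le_sum
          intro i hi
          rw [Finset.mem_range] at hi
          calc b^i * a^(p-i) ≤ b^i * b^(p-i) := by
                apply mul_le_mul_of_nonneg_left (pow_le_pow_left₀ ha hab _) (by positivity)
            _ = b^p := by rw [← pow_add]; congr 1; omega
      _ = ((p:ℝ)+1) * b^p := by simp [mul_comm]

lemma log_succ_sub_bounds (m : ℕ) (hm : 1 ≤ m) :
    1/((m:ℝ)+1) ≤ Real.log ((m:ℝ)+1) - Real.log m ∧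
      Real.log ((m:ℝ)+1) - Real.log m ≤ 1/m := by
  have hm0 : (0:ℝ) < m := by exact_mod_cast hm
  constructor
  · have h := Real.log_le_sub_one_of_pos (x := (m:ℝ)/((m:ℝ)+1)) (by positivity)
    rw [Real.log_div (by positivity) (by positivity)] at h
    have e : (m:ℝ)/((m:ℝ)+1) - 1 = -(1/((m:ℝ)+1)) := by field_simp; ring
    linarith
  · have h := Real.log_le_sub_one_of_pos (x := ((m:ℝ)+1)/m) (by positivity)
    rw [Real.log_div (by positivity) (by positivity)] at h
    have e : ((m:ℝ)+1)/(m:ℝ) - 1 = 1/(m:ℝ) := by field_simp; ring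
    linarith

lemma log_nat_nonneg (m : ℕ) : 0 ≤ Real.log m := by
  cases m with
  | zero => simp
  | succ m => exact Real.log_nonneg (by exact_mod_cast Nat.one_le_iff_ne_zero.mpr (Nat.succ_ne_zero m))

lemma log_nat_mono (m : ℕ) : Real.log m ≤ Real.log ((m:ℝ)+1) := by
  cases m with
  | zero => simp
  | succ m =>
      apply Real.log_le_log (by positivity)
      linarith

lemma sum_log_pow_div (k : ℕ) :
    Tendsto (fun n : ℕ => (∑ m ∈ range n, (Real.log m)^k / m) / (Real.log n)^(k+1))
      atTop (nhds (1/((k:ℝ)+1))) := by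
  set F : ℕ → ℝ := fun n => (Real.log n)^(k+1) with hF
  set f : ℕ → ℝ := fun m => (Real.log ((m:ℝ)+1))^(k+1) - (Real.log m)^(k+1) with hf
  set u : ℕ → ℝ := fun m => ((k:ℝ)+1) * ((Real.log m)^k / m) with hu
  have telescope : ∀ n, ∑ m ∈ range n, f m = F n := by
    intro n
    have := Finset.sum_range_sub (f := fun m : ℕ => (Real.log m)^(k+1)) (n := n)
    simp only [Nat.cast_add, Nat.cast_one] at this
    rw [hf, hF]
    simp only [Nat.cast_zero, Real.log_zero, zero_pow (Nat.succ_ne_zero k)] at this ⊢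
    rw [this]; ring
  have fnonneg : ∀ m, 0 ≤ f m := by
    intro m
    have := pow_le_pow_left₀ (log_nat_nonneg m) (log_nat_mono m) (k+1)
    simp only [hf]
    linarith
  -- eventual bounds on f
  have hFtop : Tendsto F atTop atTop := by
    apply Filter.Tendsto.comp (tendsto_pow_atTop (Nat.succ_ne_zero k)) tendsto_log_nat
  have hfsumtop : Tendsto (fun n => ∑ m ∈ range n, f m) atTop atTop := by
    simpa only [telescope] using hFtop
  have hbounds : ∀ m : ℕ, 2 ≤ m →
      ((k:ℝ)+1) * (Real.log m)^k / ((m:ℝ)+1) ≤ f m ∧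
        f m ≤ ((k:ℝ)+1) * (Real.log ((m:ℝ)+1))^k / m := by
    intro m hm
    have hm0 : (0:ℝ) < m := by exact_mod_cast (by omega : 0 < m)
    have hd := log_succ_sub_bounds m (by omega)
    have hpb := pow_sub_pow_bounds (log_nat_nonneg m) (log_nat_mono m) k
    have hlk : (0:ℝ) ≤ (Real.log m)^k := pow_nonneg (log_nat_nonneg m) k
    have hlk1 : (0:ℝ) ≤ (Real.log ((m:ℝ)+1))^k :=
      pow_nonneg (le_trans (log_nat_nonneg m) (log_nat_mono m)) k
    constructor
    · calc ((k:ℝ)+1) * (Real.log m)^k / ((m:ℝ)+1)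
          = ((k:ℝ)+1) * (Real.log m)^k * (1/((m:ℝ)+1)) := by ring
        _ ≤ ((k:ℝ)+1) * (Real.log m)^k * (Real.log ((m:ℝ)+1) - Real.log m) := by
            apply mul_le_mul_of_nonneg_left hd.1 (by positivity)
        _ ≤ f m := hpb.1
    · calc f m ≤ ((k:ℝ)+1) * (Real.log ((m:ℝ)+1))^k * (Real.log ((m:ℝ)+1) - Real.log m) :=
          hpb.2
        _ ≤ ((k:ℝ)+1) * (Real.log ((m:ℝ)+1))^k * (1/(m:ℝ)) := by
            apply mul_le_mul_of_nonneg_left hd.2 (by positivity)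
        _ = ((k:ℝ)+1) * (Real.log ((m:ℝ)+1))^k / m := by ring
  have hfpos : ∀ m : ℕ, 2 ≤ m → 0 < f m := by
    intro m hm
    have h := (hbounds m hm).1
    have hm0 : (0:ℝ) < m := by exact_mod_cast (by omega : 0 < m)
    have hlp : 0 < Real.log m := Real.log_pos (by exact_mod_cast (by omega : 1 < m))
    have : 0 < ((k:ℝ)+1) * (Real.log m)^k / ((m:ℝ)+1) := by positivity
    exact lt_of_lt_of_le this h
  -- ratio tendsto 1
  have hR : Tendsto (fun m : ℕ => u m / f m) atTop (nhds 1) := by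
    have hlow : Tendsto (fun m : ℕ => (Real.log m / Real.log ((m:ℝ)+1))^k) atTop (nhds 1) := by
      have h1 : Tendsto (fun m : ℕ => (Real.log ((m:ℝ)+1) / Real.log m)⁻¹) atTop (nhds 1) := by
        simpa using log_ratio_tendsto.inv₀ one_ne_zero
      have h2 : Tendsto (fun m : ℕ => Real.log m / Real.log ((m:ℝ)+1)) atTop (nhds 1) := by
        simpa [inv_div] using h1
      simpa using h2.pow k
    have hup : Tendsto (fun m : ℕ => ((m:ℝ)+1)/m) atTop (nhds 1) := by
      have hinv : Tendsto (fun m : ℕ => ((m:ℝ))⁻¹) atTop (nhds 0) := by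
        simpa [one_div] using tendsto_one_div_atTop_nhds_zero_nat (𝕜 := ℝ)
      have : Tendsto (fun m : ℕ => 1 + ((m:ℝ))⁻¹) atTop (nhds 1) := by
        simpa using (tendsto_const_nhds (x := (1:ℝ))).add hinv
      apply this.congr'
      filter_upwards [eventually_ge_atTop 1] with m hm
      have hm0 : (0:ℝ) < m := by exact_mod_cast hm
      field_simp
    apply tendsto_of_tendsto_of_tendsto_of_le_of_le' hlow hup
    · filter_upwards [eventually_ge_atTop 2] with m hm
      have hm0 : (0:ℝ) < m := by exact_mod_cast (by omega : 0 < m)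
      have hfp := hfpos m hm
      have hub := (hbounds m hm).2
      have hlb := (hbounds m hm).1
      have hlogm : 0 < Real.log m := Real.log_pos (by exact_mod_cast (by omega : 1 < m))
      have hlogm1 : 0 < Real.log ((m:ℝ)+1) := lt_of_lt_of_le hlogm (log_nat_mono m)
      simp only [hu]
      rw [div_pow, div_le_div_iff₀ (by positivity) hfp]
      calc (Real.log m)^k * f m
          ≤ (Real.log m)^k * (((k:ℝ)+1) * (Real.log ((m:ℝ)+1))^k / m) := by
            apply mul_le_mul_of_nonneg_left hub (by positivity)
        _ = ((k:ℝ)+1) * ((Real.log m)^k / m) * (Real.log ((m:ℝ)+1))^k := by ring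
    · filter_upwards [eventually_ge_atTop 2] with m hm
      have hm0 : (0:ℝ) < m := by exact_mod_cast (by omega : 0 < m)
      have hfp := hfpos m hm
      have hlb := (hbounds m hm).1
      have hlogm : 0 < Real.log m := Real.log_pos (by exact_mod_cast (by omega : 1 < m))
      simp only [hu]
      rw [div_le_div_iff₀ hfp hm0]
      have h' : ((k:ℝ)+1)*(Real.log m)^k ≤ f m * ((m:ℝ)+1) :=
        (div_le_iff₀ (show (0:ℝ) < (m:ℝ)+1 by positivity)).mp hlb
      have e : ((k:ℝ)+1) * ((Real.log m)^k / m) * m = ((k:ℝ)+1)*(Real.log m)^k := by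
        field_simp
      rw [e]
      linarith
  -- little-o
  have hlo : (fun m => u m - f m) =o[atTop] f := by
    rw [isLittleO_iff_tendsto']
    · have : Tendsto (fun m : ℕ => u m / f m - 1) atTop (nhds 0) := by
        simpa using hR.sub (tendsto_const_nhds (x := (1:ℝ)))
      apply this.congr'
      filter_upwards [eventually_ge_atTop 2] with m hm
      have hfp := hfpos m hm
      rw [sub_div, div_self (ne_of_gt hfp)]
    · filter_upwards [eventually_ge_atTop 2] with m hm h0
      exact absurd h0 (ne_of_gt (hfpos m hm))
  have hsum := hlo.sum_range fnonneg hfsumtop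
  have hsum' : (fun n => (∑ m ∈ range n, u m) - F n) =o[atTop] F := by
    apply hsum.congr'
    · apply Filter.Eventually.of_forall
      intro n
      show ∑ i ∈ range n, (u i - f i) = ∑ m ∈ range n, u m - F n
      rw [Finset.sum_sub_distrib, telescope]
    · apply Filter.Eventually.of_forall
      intro n
      show ∑ i ∈ range n, f i = F n
      rw [telescope]
  have hdiv0 : Tendsto (fun n => ((∑ m ∈ range n, u m) - F n) / F n) atTop (nhds 0) :=
    hsum'.tendsto_div_nhds_zero
  have hUF : Tendsto (fun n => (∑ m ∈ range n, u m) / F n) atTop (nhds 1) := by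
    have hFne : ∀ᶠ n : ℕ in atTop, F n ≠ 0 := by
      filter_upwards [eventually_ge_atTop 2] with n hn
      have : 0 < Real.log n := Real.log_pos (by exact_mod_cast (by omega : 1 < n))
      positivity
    have : Tendsto (fun n => ((∑ m ∈ range n, u m) - F n) / F n + 1) atTop (nhds 1) := by
      simpa using hdiv0.add (tendsto_const_nhds (x := (1:ℝ)))
    apply this.congr'
    filter_upwards [hFne] with n hn
    field_simp
    ring
  have hfin := hUF.div_const ((k:ℝ)+1)
  have hk0 : ((k:ℝ)+1) ≠ 0 := by positivity
  refine hfin.congr fun n => ?_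
  simp only [hu]
  rw [← Finset.mul_sum, div_div, mul_comm (F n) ((k:ℝ)+1), ← div_div,
    mul_div_cancel_left₀ _ hk0]

lemma roman_zero (n : ℕ) (hn : 1 ≤ n) : romanHarmonic n 0 = 1 := by
  have h := Int.alternating_sum_range_choose (n := n)
  rw [if_neg (by omega)] at h
  have h' : (∑ i ∈ range (n + 1), (-1 : ℝ) ^ i * (n.choose i)) = 0 := by
    have := congrArg (fun z : ℤ => (z : ℝ)) h
    push_cast at this
    simpa using this
  rw [Finset.range_eq_Ico, show Ico 0 (n+1) = Icc 0 n from rfl,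
    Finset.Icc_eq_cons_Ioc (Nat.zero_le n), Finset.sum_cons,
    show Ioc 0 n = Icc 1 n from rfl] at h'
  simp only [pow_zero, Nat.choose_zero_right, Nat.cast_one, mul_one, one_mul] at h'
  have : ∑ j ∈ Icc 1 n, (-1:ℝ) ^ j * (n.choose j) = -1 := by linarith
  unfold romanHarmonic
  have hterm : ∀ j ∈ Icc 1 n, (-1:ℝ) ^ (j-1) * (n.choose j) / (j:ℝ)^0
      = -((-1:ℝ) ^ j * (n.choose j)) := by
    intro j hj
    rw [Finset.mem_Icc] at hj
    obtain ⟨i, rfl⟩ : ∃ i, j = i + 1 := ⟨j - 1, by omega⟩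
    simp [pow_succ]
  rw [Finset.sum_congr rfl hterm, Finset.sum_neg_distrib, this]
  norm_num

lemma roman_ext (n k : ℕ) : romanHarmonic n k
    = ∑ j ∈ Finset.Icc 1 (n+1), (-1 : ℝ) ^ (j - 1) * (n.choose j) / (j : ℝ) ^ k := by
  rw [Finset.sum_Icc_succ_top (by omega), Nat.choose_succ_self]
  simp [romanHarmonic]

lemma roman_diff (n k : ℕ) : romanHarmonic (n+1) (k+1)
    = romanHarmonic n (k+1) + romanHarmonic (n+1) k / (n+1) := by
  rw [roman_ext n (k+1)]
  unfold romanHarmonic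
  rw [Finset.sum_div, ← Finset.sum_add_distrib]
  apply Finset.sum_congr rfl
  intro j hj
  rw [Finset.mem_Icc] at hj
  obtain ⟨i, rfl⟩ : ∃ i, j = i + 1 := ⟨j - 1, by omega⟩
  simp only [Nat.add_sub_cancel]
  push_cast
  set x : ℝ := (i:ℝ) + 1 with hx
  set c1 : ℝ := ((n+1).choose (i+1) : ℝ) with hc1
  set c0 : ℝ := (n.choose (i+1) : ℝ) with hc0
  set d : ℝ := (n.choose i : ℝ) with hd
  have h1 : c1 = d + c0 := by
    rw [hc1, hd, hc0, Nat.choose_succ_succ]; push_cast; ring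
  have h2 : ((n:ℝ)+1) * d = c1 * x := by
    have h := congrArg (fun z : ℕ => (z : ℝ)) (Nat.add_one_mul_choose_eq n i)
    push_cast at h
    rw [hd, hc1, hx]; linarith
  have hxpos : (0:ℝ) < x := by positivity
  have key : c1/x^(k+1) = c0/x^(k+1) + c1/(x^k*((n:ℝ)+1)) := by
    have h3 : c1/x^(k+1) - c0/x^(k+1) = c1/(x^k*((n:ℝ)+1)) := by
      rw [div_sub_div_same, div_eq_div_iff (by positivity) (by positivity), pow_succ]
      linear_combination x^k*h2 + (x^k*((n:ℝ)+1))*h1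
    linarith
  rw [div_div, mul_div_assoc, mul_div_assoc, mul_div_assoc, ← mul_add, ← key]

lemma roman_rec (n k : ℕ) : romanHarmonic n (k+1)
    = ∑ m ∈ Finset.Icc 1 n, romanHarmonic m k / m := by
  induction n with
  | zero => simp [romanHarmonic]
  | succ n ih =>
      rw [Finset.sum_Icc_succ_top (by omega), ← ih, roman_diff]
      push_cast
      ring

lemma sum_div_tendsto (k : ℕ) (b : ℕ → ℝ) (L : ℝ)
    (hb : Tendsto (fun m : ℕ => b m / (Real.log m)^k) atTop (nhds L)) :
    Tendsto (fun n : ℕ => (∑ m ∈ range n, b m / m) / (Real.log n)^(k+1)) atTop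
      (nhds (L/((k:ℝ)+1))) := by
  set g : ℕ → ℝ := fun m => (Real.log m)^k / m with hg
  set F : ℕ → ℝ := fun n => (Real.log n)^(k+1) with hF
  have hgnn : ∀ m, 0 ≤ g m := by
    intro m
    apply div_nonneg (pow_nonneg (log_nat_nonneg m) k) (Nat.cast_nonneg m)
  have hA : Tendsto (fun n => (∑ m ∈ range n, g m) / F n) atTop (nhds (1/((k:ℝ)+1))) :=
    sum_log_pow_div k
  have hFtop : Tendsto F atTop atTop := by
    apply Filter.Tendsto.comp (tendsto_pow_atTop (Nat.succ_ne_zero k)) tendsto_log_nat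
  have hFne : ∀ᶠ n : ℕ in atTop, F n ≠ 0 := by
    filter_upwards [hFtop.eventually_gt_atTop 0] with n hn
    exact ne_of_gt hn
  have hGtop : Tendsto (fun n => ∑ m ∈ range n, g m) atTop atTop := by
    have := hA.pos_mul_atTop (by positivity) hFtop
    apply this.congr'
    filter_upwards [hFne] with n hn
    exact div_mul_cancel₀ _ hn
  set e : ℕ → ℝ := fun m => b m / m - L * g m with he
  have hlo : e =o[atTop] g := by
    rw [isLittleO_iff_tendsto']
    · have hsub : Tendsto (fun m : ℕ => b m / (Real.log m)^k - L) atTop (nhds 0) := by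
        simpa using hb.sub (tendsto_const_nhds (x := L))
      apply hsub.congr'
      filter_upwards [eventually_ge_atTop 2] with m hm
      have hm0 : ((m:ℝ)) ≠ 0 := by positivity
      have hlg : (Real.log m)^k ≠ 0 := by
        have : 0 < Real.log m := Real.log_pos (by exact_mod_cast (by omega : 1 < m))
        positivity
      show b m / (Real.log m)^k - L = e m / g m
      simp only [he, hg]
      field_simp
    · filter_upwards [eventually_ge_atTop 2] with m hm h0
      exfalso
      have : 0 < g m := by
        have hl : 0 < Real.log m := Real.log_pos (by exact_mod_cast (by omega : 1 < m))
        have hm0 : (0:ℝ) < m := by exact_mod_cast (by omega : 0 < m)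
        simp only [hg]
        positivity
      exact ne_of_gt this h0
  have hsum := hlo.sum_range hgnn hGtop
  have hEF : Tendsto (fun n => (∑ m ∈ range n, e m) / F n) atTop (nhds 0) := by
    have hdiv0 := hsum.tendsto_div_nhds_zero
    have := hdiv0.mul hA
    rw [zero_mul] at this
    apply this.congr'
    filter_upwards [hGtop.eventually_gt_atTop 0] with n hn
    show (∑ m ∈ range n, e m) / (∑ m ∈ range n, g m) * ((∑ m ∈ range n, g m) / F n)
        = (∑ m ∈ range n, e m) / F n
    rw [div_mul_div_comm, mul_comm (∑ m ∈ range n, e m) (∑ m ∈ range n, g m),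
      mul_div_mul_left _ _ (ne_of_gt hn)]
  have hfin := hEF.add (hA.const_mul L)
  rw [zero_add] at hfin
  have : Tendsto (fun n => (∑ m ∈ range n, e m) / F n + L * ((∑ m ∈ range n, g m) / F n))
      atTop (nhds (L / ((k:ℝ)+1))) := by
    convert hfin using 2
    rw [mul_one_div]
  apply this.congr
  intro n
  rw [← mul_div_assoc, Finset.mul_sum, ← add_div]
  congr 1
  rw [← Finset.sum_add_distrib]
  apply Finset.sum_congr rfl
  intro m _
  simp only [he]
  ring

lemma log_succ_cast (n : ℕ) : Real.log ((n:ℝ)+1) = Real.log ((n+1 : ℕ) : ℝ) := by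
  push_cast; rfl

lemma roman_tendsto (k : ℕ) :
    Tendsto (fun n : ℕ => romanHarmonic n k / (Real.log n) ^ k) atTop
      (nhds (1 / (Nat.factorial k : ℝ))) := by
  induction k with
  | zero =>
      have : Tendsto (fun _ : ℕ => (1:ℝ)) atTop (nhds 1) := tendsto_const_nhds
      simp only [pow_zero, Nat.factorial_zero, Nat.cast_one, div_one]
      apply this.congr'
      filter_upwards [eventually_ge_atTop 1] with n hn
      rw [roman_zero n hn]
  | succ k ih =>
      have hB := sum_div_tendsto k (fun m => romanHarmonic m k) (1/(k.factorial:ℝ)) ih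
      have hS : ∀ n : ℕ, ∑ m ∈ range (n+1), romanHarmonic m k / (m:ℝ)
          = romanHarmonic n (k+1) := by
        intro n
        rw [roman_rec, Finset.range_eq_Ico, show Ico 0 (n+1) = Icc 0 n from rfl,
          Finset.Icc_eq_cons_Ioc (Nat.zero_le n), Finset.sum_cons,
          show Ioc 0 n = Icc 1 n from rfl]
        simp [romanHarmonic]
      have hcomp : Tendsto (fun n : ℕ =>
          romanHarmonic n (k+1) / (Real.log ((n:ℝ)+1))^(k+1)) atTop
          (nhds ((1/(k.factorial:ℝ))/((k:ℝ)+1))) := by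
        have := hB.comp (tendsto_add_atTop_nat 1)
        apply this.congr
        intro n
        show (∑ m ∈ range (n+1), romanHarmonic m k / (m:ℝ)) / (Real.log ((n+1 : ℕ):ℝ))^(k+1)
          = romanHarmonic n (k+1) / (Real.log ((n:ℝ)+1))^(k+1)
        rw [hS, ← log_succ_cast]
      have hr : Tendsto (fun n : ℕ => (Real.log ((n:ℝ)+1) / Real.log n)^(k+1)) atTop
          (nhds 1) := by
        simpa using log_ratio_tendsto.pow (k+1)
      have hmul := hcomp.mul hr
      rw [mul_one] at hmul
      have hconst : (1/(k.factorial:ℝ))/((k:ℝ)+1) = 1/((k+1).factorial : ℝ) := by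
        have hfac : (((k+1).factorial : ℕ) : ℝ) = ((k:ℝ)+1) * (k.factorial:ℝ) := by
          rw [Nat.factorial_succ]; push_cast; ring
        rw [hfac, div_div, mul_comm]
      rw [hconst] at hmul
      apply hmul.congr'
      filter_upwards [eventually_ge_atTop 2] with n hn
      have hln : Real.log n ≠ 0 := by
        have : 0 < Real.log n := Real.log_pos (by exact_mod_cast (by omega : 1 < n))
        exact ne_of_gt this
      have hln1 : Real.log ((n:ℝ)+1) ≠ 0 := by
        have h2 : (1:ℝ) < (n:ℝ) := by exact_mod_cast (by omega : 1 < n)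
        have : 0 < Real.log ((n:ℝ)+1) := Real.log_pos (by linarith)
        exact ne_of_gt this
      show romanHarmonic n (k+1) / (Real.log ((n:ℝ)+1))^(k+1)
          * (Real.log ((n:ℝ)+1) / Real.log n)^(k+1)
        = romanHarmonic n (k+1) / (Real.log n)^(k+1)
      rw [div_pow]
      field_simp

end RomanAux

theorem roman_harmonic_asymptotic (k : ℕ) (hk : 1 ≤ k) :
    Tendsto (fun n : ℕ => romanHarmonic n k / (Real.log n) ^ k) atTop
      (nhds (1 / (Nat.factorial k : ℝ))) :=
  roman_tendsto k
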